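/- Let k > 0, ν > 0, and c ∈ ℝ. Then for all x > 0, W^k_{ν−k,c}(x) = (2/x) Σ_{r=0}^∞ (−ck)^r (ν + 2rk) W^k_{ν+2rk,c}(x), the series on the right-hand side being convergent. -/

import Mathlib

open Real

/-- The k-gamma function, `Γ_k(x) = k^(x/k - 1) * Γ(x/k)`. -/
noncomputable def kGamma (k x : ℝ) : ℝ := k ^ (x / k - 1) * Real.Gamma (x / k)

/-- The generalized k-Bessel function `W^k_{ν,c}(x)`. -/
noncomputable def kBesselW (k ν c x : ℝ) : ℝ :=
  ∑' r : ℕ, (-c) ^ r / (kGamma k (r * k + ν + k) * (r.factorial : ℝ)) *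
    (x / 2) ^ (2 * (r : ℝ) + ν / k)

noncomputable def kBesselAux (k a c x : ℝ) (r n : ℕ) : ℝ :=
  (-c)^(n+r) * (k ^ ((1:ℝ) - a) / k^(n+r)) *
    ((x/2)^(2*(n+r)) * (x/2)^(a:ℝ) / (x/2)) /
    (n.factorial * Real.Gamma ((n:ℝ) + 2*r + a))

noncomputable def kBesselAux' (k a c x : ℝ) (r : ℕ) : ℕ → ℝ
  | 0 => 0
  | (n+1) => kBesselAux k a c x (r+1) n

lemma kterm_eval (k a c x : ℝ) (hk : 0 < k) (ha0 : 0 < a) (hx : 0 < x) (r n : ℕ) :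
    (-c) ^ n / (kGamma k (n * k + (a*k + 2*r*k) + k) * (n.factorial : ℝ)) *
      (x / 2) ^ (2 * (n : ℝ) + (a*k + 2*r*k) / k)
    = (-c)^n * (k ^ ((1:ℝ) - a) / (k * k^(n+2*r))) *
      ((x/2)^(2*n+2*r) * (x/2)^(a:ℝ)) /
      (n.factorial * (((n:ℝ) + 2*r + a) * Real.Gamma ((n:ℝ) + 2*r + a))) := by
  have hk0 : k ≠ 0 := ne_of_gt hk
  have harg : ((n:ℝ) * k + (a*k + 2*r*k) + k)/k = ((n:ℝ) + 2*r + a) + 1 := by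
    field_simp; ring
  have hexp : 2 * (n:ℝ) + (a*k + 2*r*k)/k = ((2*n + 2*r : ℕ):ℝ) + a := by
    push_cast; field_simp; ring
  have hka : k ^ (a:ℝ) = k / k ^ ((1:ℝ) - a) := by
    rw [eq_div_iff (ne_of_gt (Real.rpow_pos_of_pos hk _)), ← Real.rpow_add hk]
    simp
  rw [kGamma, harg, hexp, Real.Gamma_add_one (by positivity),
    Real.rpow_add (div_pos hx two_pos), Real.rpow_natCast]
  have hkpow : k ^ ((n:ℝ) + 2*↑r + a + 1 - 1) = k^(n+2*r) * (k / k ^ ((1:ℝ) - a)) := by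
    rw [show ((n:ℝ) + 2*↑r + a + 1 - 1) = ((n + 2*r : ℕ):ℝ) + a by push_cast; ring,
      Real.rpow_add hk, Real.rpow_natCast, hka]
  rw [hkpow]
  have hG : 0 < Real.Gamma ((n:ℝ) + 2*r + a) := Real.Gamma_pos_of_pos (by positivity)
  have hu : (0:ℝ) < k ^ ((1:ℝ) - a) := Real.rpow_pos_of_pos hk _
  have hf : (0:ℝ) < (n.factorial : ℝ) := by positivity
  field_simp
  all_goals try ring
  all_goals simp

lemma key_all (k a c x : ℝ) (hk : 0 < k) (ha0 : 0 < a) (hx : 0 < x) (r n : ℕ) :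
    (-(c*k))^r * (a*k + 2*↑r*k) *
      ((-c) ^ n / (kGamma k (n * k + (a*k + 2*r*k) + k) * (n.factorial : ℝ)) *
        (x / 2) ^ (2 * (n : ℝ) + (a*k + 2*r*k) / k))
    = (x/2) * (kBesselAux k a c x r n - kBesselAux' k a c x r n) := by
  have hk0 : k ≠ 0 := ne_of_gt hk
  have hP : (0:ℝ) < x/2 := by positivity
  have hu : (0:ℝ) < k ^ ((1:ℝ) - a) := Real.rpow_pos_of_pos hk _
  have hv : (0:ℝ) < (x/2) ^ (a:ℝ) := Real.rpow_pos_of_pos hP _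
  rw [kterm_eval k a c x hk ha0 hx r n]
  have hneg : (-(c*k))^r = (-c)^r * k^r := by
    rw [show -(c*k) = (-c) * k by ring, mul_pow]
  cases n with
  | zero =>
    have hG : 0 < Real.Gamma ((0:ℝ) + 2*r + a) := Real.Gamma_pos_of_pos (by positivity)
    simp only [kBesselAux, kBesselAux', hneg]
    push_cast
    field_simp
    ring
  | succ n =>
    have hGpos : 0 < Real.Gamma ((n:ℝ) + 2*r + 1 + a) := Real.Gamma_pos_of_pos (by positivity)
    have hf : (0:ℝ) < (n.factorial : ℝ) := by positivity
    simp only [kBesselAux, kBesselAux', hneg]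
    have hG2 : Real.Gamma ((n:ℝ) + 2*(r+1:ℕ) + a) =
        ((n:ℝ) + 2*r + 1 + a) * Real.Gamma ((n:ℝ) + 2*r + 1 + a) := by
      rw [show ((n:ℝ) + 2*(r+1:ℕ) + a) = ((n:ℝ) + 2*r + 1 + a) + 1 by push_cast; ring,
        Real.Gamma_add_one (by positivity)]
    have hG1 : Real.Gamma (((n+1:ℕ):ℝ) + 2*r + a) = Real.Gamma ((n:ℝ) + 2*r + 1 + a) := by
      push_cast; ring_nf
    rw [hG2, hG1]
    have hfact : ((n+1:ℕ).factorial : ℝ) = (n+1) * n.factorial := by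
      push_cast [Nat.factorial_succ]; ring
    rw [hfact]
    push_cast
    field_simp
    ring

lemma Gamma_fact_le (t : ℝ) (ht : 0 < t) (m : ℕ) :
    Real.Gamma (1 + t) * m.factorial ≤ Real.Gamma (m + 1 + t) := by
  induction m with
  | zero => simp
  | succ m ih =>
    have h1 : ((m + 1 : ℕ) : ℝ) + 1 + t = ((m : ℝ) + 1 + t) + 1 := by push_cast; ring
    rw [h1, Real.Gamma_add_one (by positivity)]
    have hg : 0 < Real.Gamma ((m : ℝ) + 1 + t) := Real.Gamma_pos_of_pos (by positivity)
    calc Real.Gamma (1+t) * ((m+1).factorial : ℝ)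
        = ((m:ℝ)+1) * (Real.Gamma (1+t) * m.factorial) := by push_cast [Nat.factorial_succ]; ring
      _ ≤ ((m:ℝ)+1) * Real.Gamma ((m:ℝ)+1+t) := by nlinarith
      _ ≤ ((m:ℝ)+1+t) * Real.Gamma ((m:ℝ)+1+t) := by nlinarith

lemma Gamma_fact_le' (t : ℝ) (ht : 0 < t) (m : ℕ) :
    Real.Gamma (1 + t) * m.factorial ≤ ((m : ℝ) + t) * Real.Gamma (m + t) := by
  have h := Gamma_fact_le t ht m
  rwa [show (m : ℝ) + 1 + t = ((m : ℝ) + t) + 1 by ring,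
    Real.Gamma_add_one (by positivity)] at h

lemma gamma_denom_bound (a : ℝ) (ha0 : 0 < a) (r n : ℕ) :
    a * Real.Gamma (1+a) * ((n.factorial : ℝ) * r.factorial) ≤
      (1+a)^2 * 2^n * 4^r * ((n.factorial : ℝ) * Real.Gamma ((n:ℝ) + 2*r + a)) := by
  have hG1 : 0 < Real.Gamma (1+a) := Real.Gamma_pos_of_pos (by positivity)
  have hcast : ((n:ℝ) + 2*r + a) = ((n + 2*r : ℕ):ℝ) + a := by push_cast; ring
  rw [hcast]
  set m := n + 2*r with hm
  have h1 : Real.Gamma (1+a) * (m.factorial:ℝ) ≤ ((m:ℝ) + a) * Real.Gamma ((m:ℝ) + a) :=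
    Gamma_fact_le' a ha0 m
  have hma : (0:ℝ) < (m:ℝ) + a := by positivity
  have hGm : 0 < Real.Gamma ((m:ℝ) + a) := Real.Gamma_pos_of_pos (by positivity)
  have h2n : (n:ℝ) + 1 ≤ 2^n := by exact_mod_cast (Nat.lt_two_pow_self (n := n))
  have h4r : 2*(r:ℝ) + 1 ≤ 4^r := by
    have : 2*r < 2^(2*r) := Nat.lt_two_pow_self
    have h : (2*(r:ℝ)) + 1 ≤ (2:ℝ)^(2*r) := by exact_mod_cast this
    calc 2*(r:ℝ) + 1 ≤ (2:ℝ)^(2*r) := h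
      _ = 4^r := by rw [pow_mul]; norm_num
  have hfr : (r.factorial : ℝ) ≤ (m.factorial : ℝ) := by
    exact_mod_cast Nat.factorial_le (by omega)
  -- key scalar inequality
  have key1 : a * ((m:ℝ)+a) * r.factorial ≤ (1+a)^2 * 2^n * 4^r * m.factorial := by
    have hmc : (m:ℝ) = n + 2*r := by push_cast [hm]; ring
    have hstep : a * ((m:ℝ)+a) ≤ ((n:ℝ)+a) * (2*r+a) := by nlinarith [Nat.cast_nonneg (α := ℝ) n, Nat.cast_nonneg (α := ℝ) r]
    have hstep2 : ((n:ℝ)+a) * (2*r+a) ≤ ((1+a)*2^n) * ((1+a)*4^r) := by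
      have hpn : (0:ℝ) < 2^n := by positivity
      have hpr : (0:ℝ) < 4^r := by positivity
      have e1 : (n:ℝ) + a ≤ (1+a)*2^n := by nlinarith [Nat.cast_nonneg (α := ℝ) n]
      have e2 : 2*(r:ℝ) + a ≤ (1+a)*4^r := by nlinarith [Nat.cast_nonneg (α := ℝ) r]
      have e1' : (0:ℝ) ≤ (n:ℝ) + a := by positivity
      have e2' : (0:ℝ) ≤ 2*(r:ℝ) + a := by positivity
      nlinarith
    have hrf : (0:ℝ) ≤ (r.factorial:ℝ) := by positivity
    calc a * ((m:ℝ)+a) * r.factorial ≤ (((1+a)*2^n) * ((1+a)*4^r)) * r.factorial := by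
          nlinarith [hstep.trans hstep2]
      _ ≤ (((1+a)*2^n) * ((1+a)*4^r)) * m.factorial := by
          have : (0:ℝ) ≤ ((1+a)*2^n) * ((1+a)*4^r) := by positivity
          nlinarith
      _ = (1+a)^2 * 2^n * 4^r * m.factorial := by ring
  -- combine with h1, dividing by (m+a)
  rw [← mul_le_mul_iff_of_pos_right hma]
  have hnf : (0:ℝ) ≤ (n.factorial:ℝ) := by positivity
  calc a * Real.Gamma (1+a) * ((n.factorial:ℝ) * r.factorial) * ((m:ℝ)+a)
      = (n.factorial:ℝ) * Real.Gamma (1+a) * (a * ((m:ℝ)+a) * r.factorial) := by ring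
    _ ≤ (n.factorial:ℝ) * Real.Gamma (1+a) * ((1+a)^2 * 2^n * 4^r * m.factorial) := by
        have : (0:ℝ) ≤ (n.factorial:ℝ) * Real.Gamma (1+a) := by positivity
        nlinarith
    _ = (1+a)^2 * 2^n * 4^r * (n.factorial:ℝ) * (Real.Gamma (1+a) * m.factorial) := by ring
    _ ≤ (1+a)^2 * 2^n * 4^r * (n.factorial:ℝ) * (((m:ℝ)+a) * Real.Gamma ((m:ℝ)+a)) := by
        have : (0:ℝ) ≤ (1+a)^2 * 2^n * 4^r * (n.factorial:ℝ) := by positivity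
        nlinarith
    _ = (1+a)^2 * 2^n * 4^r * ((n.factorial:ℝ) * Real.Gamma ((m:ℝ)+a)) * ((m:ℝ)+a) := by ring

lemma aux_abs_le (k a c x : ℝ) (hk : 0 < k) (ha0 : 0 < a) (hx : 0 < x) (r n : ℕ) :
    |kBesselAux k a c x r n| ≤
      (k ^ ((1:ℝ)-a) * (x/2)^(a:ℝ) / (x/2) * ((1+a)^2 / (a * Real.Gamma (1+a)))) *
        ((2*(|c| * (x/2)^2 / k))^n / n.factorial) *
        ((4*(|c| * (x/2)^2 / k))^r / r.factorial) := by
  have hP : (0:ℝ) < x/2 := by positivity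
  have hu : (0:ℝ) < k ^ ((1:ℝ) - a) := Real.rpow_pos_of_pos hk _
  have hv : (0:ℝ) < (x/2) ^ (a:ℝ) := Real.rpow_pos_of_pos hP _
  have hG : 0 < Real.Gamma ((n:ℝ) + 2*r + a) := Real.Gamma_pos_of_pos (by positivity)
  have hG1 : 0 < Real.Gamma (1+a) := Real.Gamma_pos_of_pos (by positivity)
  have hnf : (0:ℝ) < (n.factorial:ℝ) := by positivity
  have hrf : (0:ℝ) < (r.factorial:ℝ) := by positivity
  set q : ℝ := |c| * (x/2)^2 / k with hqdef
  have hq : 0 ≤ q := by positivity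
  set K0 : ℝ := k ^ ((1:ℝ)-a) * (x/2)^(a:ℝ) / (x/2) with hK0
  have hK0p : 0 < K0 := by positivity
  -- step 1 : |β| = K0 * q^(n+r) / (n! * Γ)
  have habs : |kBesselAux k a c x r n| = K0 * q^(n+r) / (n.factorial * Real.Gamma ((n:ℝ) + 2*r + a)) := by
    have hrw : kBesselAux k a c x r n =
        (-c)^(n+r) * ((k ^ ((1:ℝ) - a) / k^(n+r)) *
          ((x/2)^(2*(n+r)) * (x/2)^(a:ℝ) / (x/2)) /
          (n.factorial * Real.Gamma ((n:ℝ) + 2*r + a))) := by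
      rw [kBesselAux]; ring
    rw [hrw, abs_mul, abs_pow, abs_neg]
    have hpos : (0:ℝ) < (k ^ ((1:ℝ) - a) / k^(n+r)) *
        ((x/2)^(2*(n+r)) * (x/2)^(a:ℝ) / (x/2)) /
        (n.factorial * Real.Gamma ((n:ℝ) + 2*r + a)) := by positivity
    rw [abs_of_pos hpos]
    have hqpow : q^(n+r) = |c|^(n+r) * (x/2)^(2*(n+r)) / k^(n+r) := by
      rw [hqdef, div_pow, mul_pow, ← pow_mul]
    rw [hqpow, hK0]
    field_simp
  rw [habs]
  have hkey := gamma_denom_bound a ha0 r n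
  calc K0 * q^(n+r) / (↑n.factorial * Real.Gamma ((n:ℝ) + 2*r + a))
      ≤ K0 * q^(n+r) * ((1+a)^2 * 2^n * 4^r) / (a * Real.Gamma (1+a) * (↑n.factorial * ↑r.factorial)) := by
        rw [div_le_div_iff₀ (by positivity) (by positivity)]
        have h2 := mul_le_mul_of_nonneg_left hkey (show (0:ℝ) ≤ K0 * q^(n+r) by positivity)
        nlinarith [h2]
    _ = K0 * ((1+a)^2 / (a * Real.Gamma (1+a))) * ((2*q)^n / ↑n.factorial) * ((4*q)^r / ↑r.factorial) := by
        rw [pow_add, mul_pow, mul_pow]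
        field_simp

lemma kterm0 (k a c x : ℝ) (hk : 0 < k) (ha0 : 0 < a) (hx : 0 < x) (n : ℕ) :
    (-c) ^ n / (kGamma k (n * k + (a*k - k) + k) * (n.factorial : ℝ)) *
      (x / 2) ^ (2 * (n : ℝ) + (a*k - k) / k)
    = kBesselAux k a c x 0 n := by
  have hk0 : k ≠ 0 := ne_of_gt hk
  have hP : (0:ℝ) < x/2 := by positivity
  have harg : ((n:ℝ) * k + (a*k - k) + k)/k = (n:ℝ) + a := by field_simp; ring
  have hexp : 2 * (n:ℝ) + (a*k - k)/k = ((2*n : ℕ):ℝ) + a - 1 := by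
    push_cast; field_simp; ring
  have hG : 0 < Real.Gamma ((n:ℝ) + a) := Real.Gamma_pos_of_pos (by positivity)
  have hu : (0:ℝ) < k ^ ((1:ℝ) - a) := Real.rpow_pos_of_pos hk _
  have hv : (0:ℝ) < (x/2) ^ (a:ℝ) := Real.rpow_pos_of_pos hP _
  have hf : (0:ℝ) < (n.factorial : ℝ) := by positivity
  have hxpow : (x/2) ^ (((2*n : ℕ):ℝ) + a - 1) = (x/2)^(2*n) * (x/2)^(a:ℝ) / (x/2) := by
    rw [show (((2*n : ℕ):ℝ) + a - 1) = ((2*n : ℕ):ℝ) + a - (1:ℝ) by ring, Real.rpow_sub hP,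
      Real.rpow_add hP, Real.rpow_natCast, Real.rpow_one]
  have hkpow : k ^ ((n:ℝ) + a - 1) = k^n / k ^ ((1:ℝ) - a) := by
    rw [show ((n:ℝ) + a - 1) = ((n:ℕ):ℝ) + (a - 1) by push_cast; ring, Real.rpow_add hk,
      Real.rpow_natCast, show (a - 1 : ℝ) = -(1 - a) by ring, Real.rpow_neg (le_of_lt hk),
      div_eq_mul_inv]
  rw [kGamma, harg, hexp, hxpow, hkpow, kBesselAux]
  norm_num
  field_simp
  all_goals try ring
  all_goals simp

set_option maxHeartbeats 2000000 in
theorem kBessel_series_identity (k ν c : ℝ) (hk : 0 < k) (hν : 0 < ν) (x : ℝ) (hx : 0 < x) :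
    HasSum (fun r : ℕ => (-(c * k)) ^ r * (ν + 2 * r * k) * kBesselW k (ν + 2 * r * k) c x)
      (x / 2 * kBesselW k (ν - k) c x) := by
  have hk0 : k ≠ 0 := ne_of_gt hk
  obtain ⟨a, ha0, rfl⟩ : ∃ a, 0 < a ∧ ν = a * k :=
    ⟨ν/k, div_pos hν hk, (div_mul_cancel₀ ν hk0).symm⟩
  have hP : (0:ℝ) < x/2 := by positivity
  set q : ℝ := |c| * (x/2)^2 / k with hq
  have hq0 : 0 ≤ q := by positivity
  set C : ℝ := k ^ ((1:ℝ)-a) * (x/2)^(a:ℝ) / (x/2) * ((1+a)^2 / (a * Real.Gamma (1+a))) with hC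
  -- summability in n, for each r
  have hsumg : ∀ r : ℕ, Summable (fun n : ℕ =>
      (C * ((2*q)^n / n.factorial)) * ((4*q)^r / r.factorial)) := fun r =>
    ((Real.summable_pow_div_factorial (2*q)).mul_left C).mul_right _
  have hsumn : ∀ r, Summable (fun n => kBesselAux k a c x r n) := by
    intro r
    apply Summable.of_norm_bounded (hsumg r)
    intro n
    rw [Real.norm_eq_abs]
    exact aux_abs_le k a c x hk ha0 hx r n
  set D : ℕ → ℝ := fun r => ∑' n, kBesselAux k a c x r n with hDdef
  have hDhas : ∀ r, HasSum (kBesselAux k a c x r) (D r) := fun r => (hsumn r).hasSum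
  set E : ℝ := ∑' n : ℕ, C * ((2*q)^n / n.factorial) with hE
  have hDb : ∀ r, |D r| ≤ E * ((4*q)^r / r.factorial) := by
    intro r
    have h1 : |D r| ≤ ∑' n, |kBesselAux k a c x r n| := by
      have habs : Summable fun n => ‖kBesselAux k a c x r n‖ := by
        simpa [Real.norm_eq_abs] using (hsumn r).abs
      simpa [Real.norm_eq_abs] using norm_tsum_le_tsum_norm habs
    have h2 : ∑' n, |kBesselAux k a c x r n| ≤
        ∑' n, (C * ((2*q)^n / n.factorial)) * ((4*q)^r / r.factorial) :=
      Summable.tsum_le_tsum (fun n => aux_abs_le k a c x hk ha0 hx r n) (hsumn r).abs (hsumg r)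
    have h3 : ∑' n, (C * ((2*q)^n / n.factorial)) * ((4*q)^r / r.factorial)
        = E * ((4*q)^r / r.factorial) := by
      rw [tsum_mul_right]
    exact h1.trans (h2.trans_eq h3)
  have hgs : Summable (fun r : ℕ => E * ((4*q)^r / r.factorial)) :=
    (Real.summable_pow_div_factorial (4*q)).mul_left E
  have hDsummable : Summable D :=
    Summable.of_norm_bounded hgs (fun r => by rw [Real.norm_eq_abs]; exact hDb r)
  have hDtend : Filter.Tendsto D Filter.atTop (nhds 0) :=
    squeeze_zero_norm (fun r => by rw [Real.norm_eq_abs]; exact hDb r) hgs.tendsto_atTop_zero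
  -- the shifted sums
  have hshift : ∀ r, HasSum (kBesselAux' k a c x r) (D (r+1)) := by
    intro r
    have h1 : HasSum (fun n => kBesselAux' k a c x r (n+1)) (D (r+1)) := hDhas (r+1)
    have h2 := (hasSum_nat_add_iff (f := kBesselAux' k a c x r) 1).mp h1
    simpa [kBesselAux'] using h2
  -- per-r identity
  have hfr : ∀ r : ℕ, (-(c*k))^r * (a*k + 2*↑r*k) * kBesselW k (a*k + 2*↑r*k) c x
      = (x/2) * (D r - D (r+1)) := by
    intro r
    have h2 := ((hDhas r).sub (hshift r)).mul_left (x/2)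
    have h3 : ∀ n : ℕ, (x/2) * (kBesselAux k a c x r n - kBesselAux' k a c x r n)
        = (-(c*k))^r * (a*k + 2*↑r*k) *
          ((-c) ^ n / (kGamma k (n * k + (a*k + 2*r*k) + k) * (n.factorial : ℝ)) *
            (x / 2) ^ (2 * (n : ℝ) + (a*k + 2*r*k) / k)) :=
      fun n => (key_all k a c x hk ha0 hx r n).symm
    simp only [h3] at h2
    rw [kBesselW, ← tsum_mul_left]
    exact h2.tsum_eq
  -- summability of the series
  have hfs : Summable (fun r : ℕ => (-(c*k))^r * (a*k + 2*↑r*k) * kBesselW k (a*k + 2*↑r*k) c x) := by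
    apply Summable.congr (f := fun r => (x/2)*(D r - D (r+1)))
    · exact (hDsummable.sub ((summable_nat_add_iff 1).mpr hDsummable)).mul_left _
    · exact fun r => (hfr r).symm
  have hL := hfs.hasSum
  -- identify the limit
  have hpartial : ∀ N : ℕ, ∑ r ∈ Finset.range N,
      ((-(c*k))^r * (a*k + 2*↑r*k) * kBesselW k (a*k + 2*↑r*k) c x) = (x/2)*(D 0 - D N) := by
    intro N
    rw [Finset.sum_congr rfl (fun r _ => hfr r), ← Finset.mul_sum, Finset.sum_range_sub' D N]
  have htend1 := hL.tendsto_sum_nat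
  rw [show (fun N : ℕ => ∑ r ∈ Finset.range N,
      ((-(c*k))^r * (a*k + 2*↑r*k) * kBesselW k (a*k + 2*↑r*k) c x))
    = fun N => (x/2)*(D 0 - D N) from funext hpartial] at htend1
  have htend2 : Filter.Tendsto (fun N : ℕ => (x/2)*(D 0 - D N)) Filter.atTop
      (nhds ((x/2)*(D 0 - 0))) := (Filter.Tendsto.const_sub _ hDtend).const_mul _
  have hsum_eq : (∑' r : ℕ, ((-(c*k))^r * (a*k + 2*↑r*k) * kBesselW k (a*k + 2*↑r*k) c x))
      = (x/2) * D 0 := by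
    have := tendsto_nhds_unique htend1 htend2
    simpa using this
  have hfinal : D 0 = kBesselW k (a*k - k) c x := by
    rw [hDdef, kBesselW]
    exact (tsum_congr fun n => kterm0 k a c x hk ha0 hx n).symm
  rw [show x / 2 * kBesselW k (a*k - k) c x = (x/2) * D 0 by rw [hfinal]]
  rw [← hsum_eq]
  exact hL
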